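/- Let P₀, Q₀ be probability measures on ℝ^d and U, V probability measures on ℝ^d whose characteristic functions are strictly positive real numbers at every ω ∈ ℝ^d. Suppose the distribution μ of X − Y, for independent X ∼ P₀⋆U and Y ∼ Q₀⋆V, has characteristic function that is a strictly positive real number at every ω ∈ ℝ^d. Then for every ω ∈ ℝ^d, φ_{P₀}(ω) ≠ 0, φ_{Q₀}(ω) ≠ 0, and the phase functions agree: φ_{P₀}(ω)/|φ_{P₀}(ω)| = φ_{Q₀}(ω)/|φ_{Q₀}(ω)|. -/

import Mathlib

open MeasureTheory RealInnerProductSpace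

/-- The characteristic function of a measure `P` on `ℝ^d`. -/
noncomputable def charFun {d : ℕ} (P : Measure (EuclideanSpace ℝ (Fin d)))
    (ω : EuclideanSpace ℝ (Fin d)) : ℂ :=
  ∫ x, Complex.exp (Complex.I * (⟪ω, x⟫ : ℝ)) ∂P

/-- The phase function of a measure `P` on `ℝ^d`. -/
noncomputable def phase {d : ℕ} (P : Measure (EuclideanSpace ℝ (Fin d)))
    (ω : EuclideanSpace ℝ (Fin d)) : ℂ :=
  _root_.charFun P ω / ((‖_root_.charFun P ω‖ : ℝ) : ℂ)

lemma cont_aux {d : ℕ} (ω : EuclideanSpace ℝ (Fin d)) :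
    Continuous fun x : EuclideanSpace ℝ (Fin d) =>
      Complex.exp (Complex.I * (⟪ω, x⟫ : ℝ)) := by
  apply Complex.continuous_exp.comp
  exact continuous_const.mul (Complex.continuous_ofReal.comp (continuous_const.inner continuous_id))

lemma charFun_conv {d : ℕ} (P Q : Measure (EuclideanSpace ℝ (Fin d)))
    [SFinite P] [SFinite Q] (ω : EuclideanSpace ℝ (Fin d)) :
    _root_.charFun (P.conv Q) ω = _root_.charFun P ω * _root_.charFun Q ω := by
  rw [_root_.charFun, Measure.conv,
    integral_map (by fun_prop) (cont_aux ω).aestronglyMeasurable]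
  simp_rw [inner_add_right, Complex.ofReal_add, mul_add, Complex.exp_add]
  exact integral_prod_mul (μ := P) (ν := Q)
    (fun x => Complex.exp (Complex.I * (⟪ω, x⟫ : ℝ)))
    (fun y => Complex.exp (Complex.I * (⟪ω, y⟫ : ℝ)))

lemma charFun_map_neg {d : ℕ} (Q : Measure (EuclideanSpace ℝ (Fin d)))
    (ω : EuclideanSpace ℝ (Fin d)) :
    _root_.charFun (Q.map (fun x => -x)) ω = (starRingEnd ℂ) (_root_.charFun Q ω) := by
  rw [_root_.charFun, integral_map (by fun_prop) (cont_aux ω).aestronglyMeasurable,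
    _root_.charFun, ← integral_conj]
  congr 1
  ext x
  rw [← Complex.exp_conj]
  simp [inner_neg_right, Complex.ofReal_neg, mul_neg, neg_mul, mul_comm]

/-- If `U`, `V` are SPD components and the distribution `μ` of `X − Y`, for independent
`X ∼ P₀⋆U`, `Y ∼ Q₀⋆V`, is an SPD component, then `φ_{P₀}` and `φ_{Q₀}` never vanish and
the phase functions of `P₀` and `Q₀` agree everywhere. -/
theorem stmt_12 {d : ℕ} (P₀ Q₀ U V : Measure (EuclideanSpace ℝ (Fin d)))
    [IsProbabilityMeasure P₀] [IsProbabilityMeasure Q₀]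
    [IsProbabilityMeasure U] [IsProbabilityMeasure V]
    (hU : ∀ ω : EuclideanSpace ℝ (Fin d), ∃ r : ℝ, 0 < r ∧ _root_.charFun U ω = (r : ℂ))
    (hV : ∀ ω : EuclideanSpace ℝ (Fin d), ∃ r : ℝ, 0 < r ∧ _root_.charFun V ω = (r : ℂ))
    (μ : Measure (EuclideanSpace ℝ (Fin d)))
    (hμ : μ = (P₀.conv U).conv ((Q₀.conv V).map (fun x => -x)))
    (hSPD : ∀ ω : EuclideanSpace ℝ (Fin d), ∃ r : ℝ, 0 < r ∧ _root_.charFun μ ω = (r : ℂ)) :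
    ∀ ω : EuclideanSpace ℝ (Fin d),
      _root_.charFun P₀ ω ≠ 0 ∧ _root_.charFun Q₀ ω ≠ 0 ∧ phase P₀ ω = phase Q₀ ω := by
  intro ω
  obtain ⟨u, hu, hUω⟩ := hU ω
  obtain ⟨v, hv, hVω⟩ := hV ω
  obtain ⟨r, hr, hμω⟩ := hSPD ω
  set a := _root_.charFun P₀ ω with ha
  set b := _root_.charFun Q₀ ω with hb
  have hchar : _root_.charFun μ ω = a * u * ((starRingEnd ℂ) b * v) := by
    rw [hμ, charFun_conv, charFun_map_neg, charFun_conv, charFun_conv, hUω, hVω, map_mul]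
    ring_nf
    rw [Complex.conj_ofReal]
    rw [ha, hb]
    ring
  -- a * conj b = s, with s = r/(u*v) > 0
  set s : ℝ := r / (u * v) with hs
  have hs_pos : 0 < s := div_pos hr (mul_pos hu hv)
  have key : a * (starRingEnd ℂ) b = (s : ℂ) := by
    have huv : ((u : ℂ) * v) ≠ 0 := by
      simp only [ne_eq, mul_eq_zero, Complex.ofReal_eq_zero]
      push_neg
      exact ⟨hu.ne', hv.ne'⟩
    have : a * u * ((starRingEnd ℂ) b * v) = (r : ℂ) := by rw [← hchar, hμω]
    have hsc : (s : ℂ) = (r : ℂ) / ((u : ℂ) * (v : ℂ)) := by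
      rw [hs]; push_cast; ring
    rw [hsc, eq_div_iff huv]
    linear_combination this
  have hb0 : b ≠ 0 := by
    intro h
    rw [h, map_zero, mul_zero] at key
    exact hs_pos.ne' (by exact_mod_cast key.symm)
  have ha0 : a ≠ 0 := by
    intro h
    rw [h, zero_mul] at key
    exact hs_pos.ne' (by exact_mod_cast key.symm)
  refine ⟨ha0, hb0, ?_⟩
  have habs : (‖a‖) * ‖b‖ = s := by
    have := congrArg (‖·‖) key
    rwa [norm_mul, Complex.norm_conj, Complex.norm_real, Real.norm_eq_abs, abs_of_pos hs_pos] at this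
  have hba : ‖a‖ ≠ 0 := by simpa using ha0
  have hbb : ‖b‖ ≠ 0 := by simpa using hb0
  -- a * |b|^2 = s * b
  have h1 : a * (‖b‖ : ℂ) ^ 2 = (s : ℂ) * b := by
    have := congrArg (· * b) key
    rw [mul_assoc, mul_comm ((starRingEnd ℂ) b) b, Complex.mul_conj'] at this
    exact this
  rw [phase, phase, ← ha, ← hb, div_eq_div_iff (by exact_mod_cast hba) (by exact_mod_cast hbb)]
  · have h2 : a * (‖b‖ : ℂ) * (‖b‖ : ℂ) =
        b * (‖a‖ : ℂ) * (‖b‖ : ℂ) := by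
      have : ((‖a‖ : ℂ) * (‖b‖ : ℂ)) = (s : ℂ) := by
        exact_mod_cast congrArg (Complex.ofReal) habs
      calc a * (‖b‖ : ℂ) * (‖b‖ : ℂ)
          = a * (‖b‖ : ℂ) ^ 2 := by ring
        _ = (s : ℂ) * b := h1
        _ = b * (‖a‖ : ℂ) * (‖b‖ : ℂ) := by rw [← this]; ring
    exact mul_right_cancel₀ (by exact_mod_cast hbb) h2
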